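/- For γ ∈ (0,1) and positive integers p, q, let I_{γ,n} be the set of sequences (i₀,…,i_{n−1}) ∈ {1,…,p+q}^n such that #{0 ≤ j < n : i_j ≤ q} > γ·n, and let c_γ = limsup_{n→∞} (1/n)·log(#I_{γ,n}). Then c_γ → log q as γ → 1. -/

import Mathlib

open Filter Finset

lemma itin_lower (p q : ℕ) (γ : ℝ) (hγ : γ < 1) (n : ℕ) (hn : 0 < n) :
    q ^ n ≤ (Finset.univ.filter (fun w : Fin n → Fin (p + q) =>
      γ * n < ((Finset.univ.filter (fun j : Fin n => (w j : ℕ) < q)).card : ℝ))).card := by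
  classical
  have hle : q ≤ p + q := Nat.le_add_left q p
  have h := Finset.card_le_card_of_injOn
    (f := fun (w : Fin n → Fin q) (j : Fin n) => Fin.castLE hle (w j))
    (s := Finset.univ)
    (t := Finset.univ.filter (fun w : Fin n → Fin (p + q) =>
      γ * n < ((Finset.univ.filter (fun j : Fin n => (w j : ℕ) < q)).card : ℝ)))
    ?_ ?_
  · simpa [Fintype.card_fun] using h
  · intro w _
    rw [Finset.mem_coe, Finset.mem_filter]
    refine ⟨Finset.mem_univ _, ?_⟩
    have : (Finset.univ.filter (fun j : Fin n => ((Fin.castLE hle (w j) : Fin (p+q)) : ℕ) < q))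
        = Finset.univ := by
      apply Finset.filter_true_of_mem
      intro j _
      simpa using (w j).2
    rw [this, Finset.card_univ, Fintype.card_fin]
    have : γ * n < 1 * n := by
      apply mul_lt_mul_of_pos_right hγ
      exact_mod_cast hn
    simpa using this
  · intro w _ w' _ hww
    funext j
    have := congrFun hww j
    exact Fin.castLE_injective hle this

lemma itin_cardq (p q : ℕ) :
    (Finset.univ.filter (fun i : Fin (p + q) => (i : ℕ) < q)).card = q := by
  classical
  have hle : q ≤ p + q := Nat.le_add_left q p
  have : (Finset.univ.filter (fun i : Fin (p + q) => (i : ℕ) < q))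
      = Finset.univ.map (Fin.castLEEmb hle) := by
    ext i
    simp only [Finset.mem_filter, Finset.mem_univ, true_and, Finset.mem_map]
    constructor
    · intro hi
      exact ⟨⟨i, hi⟩, by simp [Fin.castLEEmb, Fin.ext_iff]⟩
    · rintro ⟨j, rfl⟩
      simpa using j.2
  rw [this, Finset.card_map, Finset.card_univ, Fintype.card_fin]

lemma itin_upper (p q : ℕ) (γ s : ℝ) (hs0 : 0 < s) (hs1 : s ≤ 1) (n : ℕ) :
    ((Finset.univ.filter (fun w : Fin n → Fin (p + q) =>
      γ * n < ((Finset.univ.filter (fun j : Fin n => (w j : ℕ) < q)).card : ℝ))).card : ℝ)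
      * s ^ ((1 - γ) * n) ≤ (q + p * s) ^ n := by
  classical
  set g : Fin (p + q) → ℝ := fun i => if (i : ℕ) < q then 1 else s with hgdef
  have hgnn : ∀ i, 0 ≤ g i := by
    intro i; simp only [hgdef]; split <;> linarith
  have hsum : ∑ i, g i = q + p * s := by
    rw [← Finset.sum_filter_add_sum_filter_not Finset.univ (fun i : Fin (p+q) => (i:ℕ) < q)]
    have h1 : ∑ i ∈ Finset.univ.filter (fun i : Fin (p+q) => (i:ℕ) < q), g i = q := by
      rw [Finset.sum_congr rfl (fun i hi => if_pos (Finset.mem_filter.1 hi).2),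
        Finset.sum_const, itin_cardq p q]; simp
    have hc2 : (Finset.univ.filter (fun i : Fin (p+q) => ¬ (i:ℕ) < q)).card = p := by
      have := Finset.card_filter_add_card_filter_not (s := (Finset.univ : Finset (Fin (p+q))))
        (p := fun i : Fin (p+q) => (i:ℕ) < q)
      rw [itin_cardq p q, Finset.card_univ, Fintype.card_fin] at this
      omega
    have h2 : ∑ i ∈ Finset.univ.filter (fun i : Fin (p+q) => ¬ (i:ℕ) < q), g i = p * s := by
      rw [Finset.sum_congr rfl (fun i hi => if_neg (Finset.mem_filter.1 hi).2),
        Finset.sum_const, hc2]; simp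
    rw [h1, h2]
  have hprod : ∀ w : Fin n → Fin (p + q),
      ∏ j, g (w j) = s ^ (n - (Finset.univ.filter (fun j : Fin n => (w j : ℕ) < q)).card) := by
    intro w
    rw [← Finset.prod_filter_mul_prod_filter_not Finset.univ (fun j : Fin n => (w j : ℕ) < q)]
    have h1 : ∏ j ∈ Finset.univ.filter (fun j : Fin n => (w j:ℕ) < q), g (w j) = 1 :=
      Finset.prod_eq_one (fun j hj => if_pos (Finset.mem_filter.1 hj).2)
    have h2 : ∏ j ∈ Finset.univ.filter (fun j : Fin n => ¬ (w j:ℕ) < q), g (w j)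
        = s ^ (Finset.univ.filter (fun j : Fin n => ¬ (w j:ℕ) < q)).card := by
      rw [Finset.prod_congr rfl (fun j hj => if_neg (Finset.mem_filter.1 hj).2),
        Finset.prod_const]
    have hcard : (Finset.univ.filter (fun j : Fin n => ¬ (w j:ℕ) < q)).card
        = n - (Finset.univ.filter (fun j : Fin n => (w j:ℕ) < q)).card := by
      have := Finset.card_filter_add_card_filter_not (s := (Finset.univ : Finset (Fin n)))
        (p := fun j : Fin n => (w j:ℕ) < q)
      rw [Finset.card_univ, Fintype.card_fin] at this
      omega
    rw [h1, h2, hcard, one_mul]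
  have htot : ∑ w : Fin n → Fin (p + q), ∏ j, g (w j) = (q + p * s) ^ n := by
    have h := Finset.prod_univ_sum (t := fun _ : Fin n => (Finset.univ : Finset (Fin (p+q))))
      (f := fun _ i => g i)
    rw [Fintype.piFinset_univ] at h
    rw [← h]
    simp [hsum]
  have key : ∀ w ∈ Finset.univ.filter (fun w : Fin n → Fin (p + q) =>
      γ * n < ((Finset.univ.filter (fun j : Fin n => (w j : ℕ) < q)).card : ℝ)),
      s ^ ((1 - γ) * n) ≤ ∏ j, g (w j) := by
    intro w hw
    rw [hprod w]
    set k := (Finset.univ.filter (fun j : Fin n => (w j : ℕ) < q)).card with hk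
    have hkγ : γ * n < (k : ℝ) := (Finset.mem_filter.1 hw).2
    have hkn : k ≤ n := by
      have := Finset.card_filter_le Finset.univ (fun j : Fin n => (w j : ℕ) < q)
      simpa using this
    calc s ^ ((1 - γ) * n) ≤ s ^ (((n - k : ℕ) : ℝ)) := by
          apply Real.rpow_le_rpow_of_exponent_ge hs0 hs1
          rw [Nat.cast_sub hkn]
          nlinarith [hkγ]
      _ = s ^ (n - k) := by rw [Real.rpow_natCast]
  calc ((Finset.univ.filter (fun w : Fin n → Fin (p + q) =>
      γ * n < ((Finset.univ.filter (fun j : Fin n => (w j : ℕ) < q)).card : ℝ))).card : ℝ)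
      * s ^ ((1 - γ) * n)
      = ∑ _w ∈ Finset.univ.filter (fun w : Fin n → Fin (p + q) =>
          γ * n < ((Finset.univ.filter (fun j : Fin n => (w j : ℕ) < q)).card : ℝ)),
          s ^ ((1 - γ) * n) := by rw [Finset.sum_const, nsmul_eq_mul]
    _ ≤ ∑ w ∈ Finset.univ.filter (fun w : Fin n → Fin (p + q) =>
          γ * n < ((Finset.univ.filter (fun j : Fin n => (w j : ℕ) < q)).card : ℝ)),
          ∏ j, g (w j) := Finset.sum_le_sum key
    _ ≤ ∑ w : Fin n → Fin (p + q), ∏ j, g (w j) :=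
        Finset.sum_le_sum_of_subset_of_nonneg (Finset.subset_univ _)
          (fun w _ _ => Finset.prod_nonneg (fun j _ => hgnn (w j)))
    _ = (q + p * s) ^ n := htot

lemma itin_log_lower (p q : ℕ) (hq : 0 < q) (γ : ℝ) (hγ : γ < 1) (n : ℕ) (hn : 0 < n) :
    Real.log q ≤ (1 / n : ℝ) * Real.log
      ((Finset.univ.filter (fun w : Fin n → Fin (p + q) =>
        γ * n < ((Finset.univ.filter (fun j : Fin n => (w j : ℕ) < q)).card : ℝ))).card) := by
  have hcard := itin_lower p q γ hγ n hn
  have hqn : (0:ℝ) < (q:ℝ) ^ n := by positivity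
  have hlog : Real.log ((q:ℝ) ^ n) ≤ Real.log
      ((Finset.univ.filter (fun w : Fin n → Fin (p + q) =>
        γ * n < ((Finset.univ.filter (fun j : Fin n => (w j : ℕ) < q)).card : ℝ))).card) := by
    apply Real.log_le_log hqn
    exact_mod_cast hcard
  rw [Real.log_pow] at hlog
  have hn' : (0:ℝ) < n := by exact_mod_cast hn
  calc Real.log q = (1 / n : ℝ) * ((n : ℝ) * Real.log q) := by field_simp
    _ ≤ _ := mul_le_mul_of_nonneg_left hlog (by positivity)

lemma itin_log_upper (p q : ℕ) (hq : 0 < q) (γ s : ℝ) (hγ : γ < 1)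
    (hs0 : 0 < s) (hs1 : s ≤ 1) (n : ℕ) (hn : 0 < n) :
    (1 / n : ℝ) * Real.log
      ((Finset.univ.filter (fun w : Fin n → Fin (p + q) =>
        γ * n < ((Finset.univ.filter (fun j : Fin n => (w j : ℕ) < q)).card : ℝ))).card)
      ≤ Real.log (q + p * s) - (1 - γ) * Real.log s := by
  set A := ((Finset.univ.filter (fun w : Fin n → Fin (p + q) =>
        γ * n < ((Finset.univ.filter (fun j : Fin n => (w j : ℕ) < q)).card : ℝ))).card : ℝ)
    with hA
  have hApos : (0:ℝ) < A := by
    have := itin_lower p q γ hγ n hn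
    have h1 : (1:ℕ) ≤ q ^ n := Nat.one_le_pow _ _ hq
    have : (1:ℕ) ≤ (Finset.univ.filter (fun w : Fin n → Fin (p + q) =>
        γ * n < ((Finset.univ.filter (fun j : Fin n => (w j : ℕ) < q)).card : ℝ))).card :=
      le_trans h1 this
    rw [hA]; exact_mod_cast this
  have hspos : (0:ℝ) < s ^ ((1 - γ) * n) := Real.rpow_pos_of_pos hs0 _
  have hup := itin_upper p q γ s hs0 hs1 n
  have hAle : A ≤ (q + p * s) ^ n / s ^ ((1 - γ) * n) := by
    rw [le_div_iff₀ hspos]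
    exact hup
  have hqs : (0:ℝ) < (q:ℝ) + p * s := by
    have : (0:ℝ) < (q:ℝ) := by exact_mod_cast hq
    positivity
  have hlog : Real.log A ≤ Real.log ((q + p * s) ^ n / s ^ ((1 - γ) * n)) :=
    Real.log_le_log hApos hAle
  rw [Real.log_div (by positivity) (ne_of_gt hspos), Real.log_pow,
    Real.log_rpow hs0] at hlog
  have hn' : (0:ℝ) < n := by exact_mod_cast hn
  have := mul_le_mul_of_nonneg_left hlog (le_of_lt (by positivity : (0:ℝ) < 1 / n))
  calc (1 / n : ℝ) * Real.log A
      ≤ (1 / n : ℝ) * ((n : ℝ) * Real.log (q + p * s) - (1 - γ) * n * Real.log s) := this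
    _ = Real.log (q + p * s) - (1 - γ) * Real.log s := by field_simp

theorem itinerary_growth_rate (p q : ℕ) (hp : 0 < p) (hq : 0 < q) :
    Filter.Tendsto
      (fun γ : ℝ => Filter.atTop.limsup (fun n : ℕ =>
        (1 / n : ℝ) * Real.log
          ((Finset.univ.filter (fun w : Fin n → Fin (p + q) =>
            γ * n < ((Finset.univ.filter (fun j : Fin n => (w j : ℕ) < q)).card : ℝ))).card)))
      (nhdsWithin 1 (Set.Ioo 0 1)) (nhds (Real.log q)) := by
  set F : ℝ → ℕ → ℝ := fun γ n =>
    (1 / n : ℝ) * Real.log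
      ((Finset.univ.filter (fun w : Fin n → Fin (p + q) =>
        γ * n < ((Finset.univ.filter (fun j : Fin n => (w j : ℕ) < q)).card : ℝ))).card)
    with hF
  -- general limsup bounds for fixed γ, s
  have hlb : ∀ γ : ℝ, γ < 1 → Real.log q ≤ Filter.atTop.limsup (F γ) := by
    intro γ hγ
    apply le_limsup_of_frequently_le
    · apply Filter.Eventually.frequently
      filter_upwards [Filter.eventually_gt_atTop 0] with n hn
      exact itin_log_lower p q hq γ hγ n hn
    · refine ⟨Real.log (q + p * 1), Filter.eventually_map.2 ?_⟩
      filter_upwards [Filter.eventually_gt_atTop 0] with n hn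
      have := itin_log_upper p q hq γ 1 hγ one_pos le_rfl n hn
      simpa only [mul_one, Real.log_one, mul_zero, sub_zero] using this
  have hub : ∀ γ : ℝ, γ < 1 → ∀ s : ℝ, 0 < s → s ≤ 1 →
      Filter.atTop.limsup (F γ) ≤ Real.log (q + p * s) - (1 - γ) * Real.log s := by
    intro γ hγ s hs0 hs1
    apply limsup_le_of_le
    · apply isCoboundedUnder_le_of_eventually_le Filter.atTop (x := Real.log q)
      filter_upwards [Filter.eventually_gt_atTop 0] with n hn
      exact itin_log_lower p q hq γ hγ n hn
    · filter_upwards [Filter.eventually_gt_atTop 0] with n hn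
      exact itin_log_upper p q hq γ s hγ hs0 hs1 n hn
  rw [Metric.tendsto_nhds]
  intro ε hε
  set s : ℝ := min 1 ((q : ℝ) * ε / (4 * p)) with hsdef
  have hq' : (0:ℝ) < q := by exact_mod_cast hq
  have hp' : (0:ℝ) < p := by exact_mod_cast hp
  have hs0 : 0 < s := lt_min one_pos (by positivity)
  have hs1 : s ≤ 1 := min_le_left _ _
  -- log (q + p s) ≤ log q + ε / 4
  have hqs : (0:ℝ) < (q:ℝ) + p * s := by positivity
  have hlog1 : Real.log ((q:ℝ) + p * s) ≤ Real.log q + ε / 4 := by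
    have h1 : Real.log (((q:ℝ) + p * s) / q) ≤ ((q:ℝ) + p * s) / q - 1 :=
      Real.log_le_sub_one_of_pos (by positivity)
    rw [Real.log_div (ne_of_gt hqs) (ne_of_gt hq')] at h1
    have h2 : ((q:ℝ) + p * s) / q - 1 = p * s / q := by field_simp; ring
    have h3 : p * s ≤ (q:ℝ) * ε / 4 := by
      have := min_le_right (1:ℝ) ((q : ℝ) * ε / (4 * p))
      calc (p:ℝ) * s ≤ p * ((q : ℝ) * ε / (4 * p)) := by nlinarith
        _ = (q:ℝ) * ε / 4 := by field_simp
    have h4 : p * s / q ≤ ε / 4 := by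
      rw [div_le_div_iff₀ hq' (by norm_num : (0:ℝ) < 4)]
      nlinarith
    linarith
  set L : ℝ := -Real.log s with hLdef
  have hL : 0 ≤ L := by
    have := Real.log_nonpos (le_of_lt hs0) hs1
    simp [hLdef]; linarith
  set δ : ℝ := ε / (4 * (L + 1)) with hδdef
  have hδ : 0 < δ := by positivity
  have hδeq : δ * (L + 1) = ε / 4 := by
    rw [hδdef]; field_simp
  clear_value δ L s
  rw [eventually_nhdsWithin_iff, Metric.eventually_nhds_iff]
  refine ⟨δ, hδ, ?_⟩
  intro γ hγd hγmem
  obtain ⟨hγ0, hγ1⟩ := hγmem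
  have hdγ : 1 - γ < δ := by
    rw [Real.dist_eq, abs_lt] at hγd
    linarith [hγd.1]
  have hγterm : (1 - γ) * L ≤ ε / 4 := by
    have h1 : (1 - γ) * L ≤ δ * L := by nlinarith
    have h2 : δ * L ≤ δ * (L + 1) := by nlinarith
    linarith [hδeq]
  have hub' : Filter.atTop.limsup (F γ) ≤ Real.log q + ε / 2 := by
    have := hub γ hγ1 s hs0 hs1
    have heq : Real.log ((q:ℝ) + p * s) - (1 - γ) * Real.log s
        = Real.log ((q:ℝ) + p * s) + (1 - γ) * L := by
      rw [hLdef]; ring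
    rw [heq] at this
    linarith
  have hlb' := hlb γ hγ1
  rw [Real.dist_eq, abs_lt]
  constructor <;> simp only [hF] at hub' hlb' <;> [linarith; linarith]
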